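/- Let δ, λ, μ > 0 and p, q ∈ ℕ with p, q ≥ 1, and suppose λμ ≤ 1. Define the lattices X = (1/δ)(λℤ × (1/(λp))ℤ) and Y = (1/δ)((1/(μq))ℤ × μℤ) in ℝ². Then there exist countable partitions X = ⨆_{k≥1} X_k and Y = ⨆_{k≥1} Y_k such that for every k: card(X_k) = p, card(Y_k) = q, and there exists v_k ∈ ℝ² with X_k ∪ Y_k ⊆ v_k + [0, 1/(δμ)) × [0, 1/(δλ)). -/

import Mathlib

noncomputable def zenc : ℕ ≃ ℤ × ℤ := (Denumerable.eqv (ℤ × ℤ)).symm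

noncomputable def rowOf (c : ℝ) (m j : ℤ) : ℤ := ⌈(j:ℝ)/c⌉ - m

noncomputable def XBlk (δ lam c : ℝ) (p : ℕ) (mj : ℤ × ℤ) : Set (ℝ × ℝ) :=
  (fun r : ℤ => ((1/δ) * (lam * (mj.1:ℝ)),
    (1/δ) * (((p*mj.2 + ⌈-((p:ℝ)*c*(mj.1:ℝ))⌉ + r : ℤ) : ℝ) / (lam * p)))) '' Set.Ico 0 (p:ℤ)

noncomputable def YBlk (δ mu c : ℝ) (q : ℕ) (mj : ℤ × ℤ) : Set (ℝ × ℝ) :=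
  (fun r : ℤ => ((1/δ) * (((q*mj.2 + ⌈-((q:ℝ)*c*((rowOf c mj.1 mj.2):ℝ))⌉ + r : ℤ) : ℝ) / (mu * q)),
    (1/δ) * (mu * ((rowOf c mj.1 mj.2):ℝ)))) '' Set.Ico 0 (q:ℤ)

lemma euclid {P j r j' r' : ℤ} (hP : 0 < P) (h0 : 0 ≤ r) (h1 : r < P)
    (h0' : 0 ≤ r') (h1' : r' < P) (h : P*j + r = P*j' + r') : j = j' ∧ r = r' := by
  have hj : j = j' := by
    by_contra hne
    have h2 : P*(j - j') = r' - r := by ring_nf; linarith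
    have h3 : (1:ℤ) ≤ |j - j'| := Int.one_le_abs (sub_ne_zero.mpr hne)
    have h4 : P ≤ |P*(j - j')| := by
      rw [abs_mul, abs_of_pos hP]
      nlinarith [abs_nonneg (j - j')]
    rw [h2] at h4
    have h5 : |r' - r| < P := abs_lt.mpr ⟨by linarith, by linarith⟩
    linarith
  exact ⟨hj, by rw [hj] at h; linarith⟩

section params
variable {δ lam mu c : ℝ} {p q : ℕ}

lemma cancel_lin (hδ : δ ≠ 0) (hlam : lam ≠ 0) {a b : ℤ}
    (h : (1/δ) * (lam * (a:ℝ)) = (1/δ) * (lam * (b:ℝ))) : a = b := by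
  have : (a:ℝ) = b := by
    field_simp [hlam] at h
    exact_mod_cast h
  exact_mod_cast this

lemma cancel_divp (hδ : δ ≠ 0) (hlam : lam ≠ 0) (hp : (p:ℝ) ≠ 0) {a b : ℤ}
    (h : (1/δ) * ((a:ℝ) / (lam*p)) = (1/δ) * ((b:ℝ) / (lam*p))) : a = b := by
  have : (a:ℝ) = b := by
    field_simp [hlam, hp] at h
    exact_mod_cast h
  exact_mod_cast this

lemma Xdisj (hδ : δ ≠ 0) (hlam : lam ≠ 0) (hp : 1 ≤ p)
    {mj mj' : ℤ × ℤ} (hne : mj ≠ mj') :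
    Disjoint (XBlk δ lam c p mj) (XBlk δ lam c p mj') := by
  obtain ⟨m, j⟩ := mj
  obtain ⟨m', j'⟩ := mj'
  have hpR : (p:ℝ) ≠ 0 := Nat.cast_ne_zero.mpr (by omega)
  rw [Set.disjoint_left]
  rintro w ⟨r, hr, rfl⟩ ⟨r', hr', heq⟩
  simp only [XBlk, Prod.mk.injEq] at heq
  obtain ⟨h1, h2⟩ := heq
  have hm : m' = m := cancel_lin hδ hlam h1
  subst hm
  have h2' : (p:ℤ)*j' + ⌈-((p:ℝ)*c*(m':ℝ))⌉ + r' = (p:ℤ)*j + ⌈-((p:ℝ)*c*(m':ℝ))⌉ + r :=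
    cancel_divp hδ hlam hpR h2
  rw [Set.mem_Ico] at hr hr'
  have hPpos : (0:ℤ) < (p:ℤ) := by exact_mod_cast hp
  have heq2 : (p:ℤ)*j' + r' = (p:ℤ)*j + r := by linarith
  have := euclid hPpos hr'.1 hr'.2 hr.1 hr.2 heq2
  exact hne (by rw [this.1])
end params

section more
variable {δ lam mu c : ℝ} {p q : ℕ}

lemma Ydisj (hδ : δ ≠ 0) (hmu : mu ≠ 0) (hq : 1 ≤ q)
    {mj mj' : ℤ × ℤ} (hne : mj ≠ mj') :
    Disjoint (YBlk δ mu c q mj) (YBlk δ mu c q mj') := by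
  obtain ⟨m, j⟩ := mj
  obtain ⟨m', j'⟩ := mj'
  have hqR : (q:ℝ) ≠ 0 := Nat.cast_ne_zero.mpr (by omega)
  rw [Set.disjoint_left]
  rintro w ⟨r, hr, rfl⟩ ⟨r', hr', heq⟩
  simp only [YBlk, Prod.mk.injEq] at heq
  obtain ⟨h1, h2⟩ := heq
  have hn : rowOf c m' j' = rowOf c m j := cancel_lin hδ hmu h2
  rw [hn] at h1
  have h1' : (q:ℤ)*j' + ⌈-((q:ℝ)*c*((rowOf c m j):ℝ))⌉ + r'
      = (q:ℤ)*j + ⌈-((q:ℝ)*c*((rowOf c m j):ℝ))⌉ + r := cancel_divp hδ hmu hqR h1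
  rw [Set.mem_Ico] at hr hr'
  have hQpos : (0:ℤ) < (q:ℤ) := by exact_mod_cast hq
  have heq2 : (q:ℤ)*j' + r' = (q:ℤ)*j + r := by linarith
  have hjj := (euclid hQpos hr'.1 hr'.2 hr.1 hr.2 heq2).1
  apply hne
  rw [hjj] at hn ⊢
  simp only [rowOf] at hn
  have : m' = m := by omega
  rw [this]

lemma Xunion (hδ : δ ≠ 0) (hlam : lam ≠ 0) (hp : 1 ≤ p) :
    (⋃ k, XBlk δ lam c p (zenc k)) =
      {w : ℝ × ℝ | ∃ m n : ℤ,
        w = ((1 / δ) * (lam * (m : ℝ)), (1 / δ) * ((n : ℝ) / (lam * (p : ℝ))))} := by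
  have hPpos : (0:ℤ) < (p:ℤ) := by exact_mod_cast hp
  ext w
  simp only [Set.mem_iUnion, Set.mem_setOf_eq]
  constructor
  · rintro ⟨k, r, hr, rfl⟩
    exact ⟨(zenc k).1, ((p:ℤ)*(zenc k).2 + ⌈-((p:ℝ)*c*((zenc k).1:ℝ))⌉ + r : ℤ), rfl⟩
  · rintro ⟨m, a, rfl⟩
    set d : ℤ := ⌈-((p:ℝ)*c*(m:ℝ))⌉ with hd
    refine ⟨zenc.symm (m, (a - d)/(p:ℤ)), ?_⟩
    rw [XBlk, Equiv.apply_symm_apply]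
    refine ⟨(a - d) % (p:ℤ), Set.mem_Ico.mpr
      ⟨Int.emod_nonneg _ (by omega), Int.emod_lt_of_pos _ hPpos⟩, ?_⟩
    have hdiv := Int.mul_ediv_add_emod (a - d) (p:ℤ)
    have hsum : (p:ℤ) * ((a - d)/(p:ℤ)) + ⌈-((p:ℝ)*c*(m:ℝ))⌉ + (a - d) % (p:ℤ) = a := by
      rw [← hd]; linarith
    simp only [hsum]

lemma Yunion (hδ : δ ≠ 0) (hmu : mu ≠ 0) (hq : 1 ≤ q) :
    (⋃ k, YBlk δ mu c q (zenc k)) =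
      {w : ℝ × ℝ | ∃ m n : ℤ,
        w = ((1 / δ) * ((m : ℝ) / (mu * (q : ℝ))), (1 / δ) * (mu * (n : ℝ)))} := by
  have hQpos : (0:ℤ) < (q:ℤ) := by exact_mod_cast hq
  ext w
  simp only [Set.mem_iUnion, Set.mem_setOf_eq]
  constructor
  · rintro ⟨k, r, hr, rfl⟩
    exact ⟨((q:ℤ)*(zenc k).2 + ⌈-((q:ℝ)*c*((rowOf c (zenc k).1 (zenc k).2):ℝ))⌉ + r : ℤ),
      rowOf c (zenc k).1 (zenc k).2, rfl⟩
  · rintro ⟨g, n, rfl⟩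
    set e0 : ℤ := ⌈-((q:ℝ)*c*(n:ℝ))⌉ with he0
    set j0 : ℤ := (g - e0)/(q:ℤ) with hj0
    set M0 : ℤ := ⌈(j0:ℝ)/c⌉ - n with hM0
    refine ⟨zenc.symm (M0, j0), ?_⟩
    rw [YBlk, Equiv.apply_symm_apply]
    have hrow : rowOf c M0 j0 = n := by rw [rowOf, hM0]; ring
    refine ⟨(g - e0) % (q:ℤ), Set.mem_Ico.mpr
      ⟨Int.emod_nonneg _ (by omega), Int.emod_lt_of_pos _ hQpos⟩, ?_⟩
    have hdiv := Int.mul_ediv_add_emod (g - e0) (q:ℤ)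
    simp only [hrow, ← he0]
    have hsum : (q:ℤ)*j0 + e0 + (g - e0) % (q:ℤ) = g := by rw [hj0]; linarith
    simp only [hsum]

lemma Xcard (hδ : δ ≠ 0) (hlam : lam ≠ 0) (hp : 1 ≤ p) (mj : ℤ × ℤ) :
    (XBlk δ lam c p mj).ncard = p := by
  have hpR : (p:ℝ) ≠ 0 := Nat.cast_ne_zero.mpr (by omega)
  rw [XBlk, Set.ncard_image_of_injOn]
  · rw [← Finset.coe_Ico, Set.ncard_coe_finset, Int.card_Ico]
    omega
  · rintro r hr r' hr' heq
    simp only [Prod.mk.injEq] at heq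
    have := cancel_divp hδ hlam hpR heq.2
    linarith

lemma Ycard (hδ : δ ≠ 0) (hmu : mu ≠ 0) (hq : 1 ≤ q) (mj : ℤ × ℤ) :
    (YBlk δ mu c q mj).ncard = q := by
  have hqR : (q:ℝ) ≠ 0 := Nat.cast_ne_zero.mpr (by omega)
  rw [YBlk, Set.ncard_image_of_injOn]
  · rw [← Finset.coe_Ico, Set.ncard_coe_finset, Int.card_Ico]
    omega
  · rintro r hr r' hr' heq
    simp only [Prod.mk.injEq] at heq
    have := cancel_divp hδ hmu hqR heq.1
    linarith

end more

section main
variable {δ lam mu c : ℝ} {p q : ℕ}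

theorem boxlem (hδ : 0 < δ) (hlam : 0 < lam) (hmu : 0 < mu) (hc : c = lam*mu) (hc1 : c ≤ 1)
    (hp : 1 ≤ p) (hq : 1 ≤ q) (mj : ℤ × ℤ) :
    ∃ v : ℝ × ℝ, (XBlk δ lam c p mj ∪ YBlk δ mu c q mj) ⊆
      {w : ℝ × ℝ | v.1 ≤ w.1 ∧ w.1 < v.1 + 1 / (δ * mu) ∧
        v.2 ≤ w.2 ∧ w.2 < v.2 + 1 / (δ * lam)} := by
  have hc0 : 0 < c := by rw [hc]; positivity
  have hpR : (0:ℝ) < (p:ℕ) := by exact_mod_cast hp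
  have hqR : (0:ℝ) < (q:ℕ) := by exact_mod_cast hq
  obtain ⟨m, j⟩ := mj
  simp only [XBlk, YBlk, rowOf]
  set K : ℤ := ⌈(j:ℝ)/c⌉ with hK
  set n : ℤ := K - m with hn
  set d : ℤ := ⌈-((p:ℝ)*c*(m:ℝ))⌉ with hd
  set e : ℤ := ⌈-((q:ℝ)*c*(n:ℝ))⌉ with he
  -- ceiling facts
  have hK1 : (j:ℝ) ≤ c*K := by
    have h := Int.le_ceil ((j:ℝ)/c)
    rw [div_le_iff₀ hc0] at h
    rw [← hK] at h
    linarith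
  have hK2 : c*(K:ℝ) < j + c := by
    have h := Int.ceil_lt_add_one ((j:ℝ)/c)
    rw [← hK] at h
    have h2 := mul_lt_mul_of_pos_left h hc0
    have h3 : c * ((j:ℝ)/c + 1) = j + c := by field_simp
    linarith
  have hd1 : -((p:ℝ)*c*m) ≤ (d:ℝ) := by rw [hd]; exact Int.le_ceil _
  have hd2 : (d:ℝ) < -((p:ℝ)*c*m) + 1 := by
    have h := Int.ceil_lt_add_one (-((p:ℝ)*c*m)); rw [← hd] at h; exact h
  have he1 : -((q:ℝ)*c*n) ≤ (e:ℝ) := by rw [he]; exact Int.le_ceil _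
  have he2 : (e:ℝ) < -((q:ℝ)*c*n) + 1 := by
    have h := Int.ceil_lt_add_one (-((q:ℝ)*c*n)); rw [← he] at h; exact h
  have hnR : (n:ℝ) = (K:ℝ) - (m:ℝ) := by rw [hn]; push_cast; ring
  -- scaled facts
  have hjK1 : c*(K:ℝ) < (j:ℝ) + 1 := by linarith
  have hqK1 : (q:ℝ)*(j:ℝ) ≤ (q:ℝ)*(c*K) := mul_le_mul_of_nonneg_left hK1 (le_of_lt hqR)
  have hqK2 : (q:ℝ)*(c*K) < (q:ℝ)*((j:ℝ) + 1) := mul_lt_mul_of_pos_left hjK1 hqR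
  have hpK1 : (p:ℝ)*(j:ℝ) ≤ (p:ℝ)*(c*K) := mul_le_mul_of_nonneg_left hK1 (le_of_lt hpR)
  have hpK2 : (p:ℝ)*(c*K) < (p:ℝ)*((j:ℝ) + 1) := mul_lt_mul_of_pos_left hjK1 hpR
  have hqcn : (q:ℝ)*(c*(n:ℝ)) = (q:ℝ)*(c*K) - (q:ℝ)*(c*m) := by rw [hnR]; ring
  have hpcn : (p:ℝ)*(c*(n:ℝ)) = (p:ℝ)*(c*K) - (p:ℝ)*(c*m) := by rw [hnR]; ring
  -- key numerator inequalities
  have KA : (q:ℝ)*(c*m) < (((q:ℤ)*j + e : ℤ):ℝ) + q := by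
    push_cast
    have h1 : -((q:ℝ)*(c*(n:ℝ))) ≤ (e:ℝ) := by linarith [he1]
    linarith [hqK2, hqcn, h1]
  have KB : ∀ r : ℤ, 0 ≤ r → r < (q:ℤ) →
      (((q:ℤ)*j + e + r : ℤ):ℝ) < (q:ℝ)*(c*m) + q := by
    intro r h0 h1
    have hr1 : (r:ℝ) ≤ (q:ℝ) - 1 := by
      have h2 : r ≤ (q:ℤ) - 1 := by omega
      exact_mod_cast h2
    push_cast
    have h3 : (e:ℝ) < -((q:ℝ)*(c*(n:ℝ))) + 1 := by linarith [he2]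
    linarith [hqK1, hqcn, h3]
  have KC : (p:ℝ)*(c*n) < (((p:ℤ)*j + d : ℤ):ℝ) + p := by
    push_cast
    have h1 : -((p:ℝ)*(c*(m:ℝ))) ≤ (d:ℝ) := by linarith [hd1]
    linarith [hpK2, hpcn, h1]
  have KD : ∀ r : ℤ, 0 ≤ r → r < (p:ℤ) →
      (((p:ℤ)*j + d + r : ℤ):ℝ) < (p:ℝ)*(c*n) + p := by
    intro r h0 h1
    have hr1 : (r:ℝ) ≤ (p:ℝ) - 1 := by
      have h2 : r ≤ (p:ℤ) - 1 := by omega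
      exact_mod_cast h2
    push_cast
    have h3 : (d:ℝ) < -((p:ℝ)*(c*(m:ℝ))) + 1 := by linarith [hd2]
    linarith [hpK1, hpcn, h3]
  -- denominators
  have hDu : (0:ℝ) < δ*(mu*q) := by positivity
  have hDv : (0:ℝ) < δ*(lam*p) := by positivity
  -- coordinate rewrites
  have ux : (1/δ)*(lam*(m:ℝ)) = ((q:ℝ)*(c*m))/(δ*(mu*q)) := by
    rw [one_div_mul_eq_div, div_eq_div_iff hδ.ne' hDu.ne', hc]; ring
  have uy : ∀ g : ℤ, (1/δ)*((g:ℝ)/(mu*(q:ℝ))) = (g:ℝ)/(δ*(mu*q)) := by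
    intro g; rw [one_div_mul_eq_div, div_div, mul_comm (mu*(q:ℝ)) δ]
  have uw : 1/(δ*mu) = (q:ℝ)/(δ*(mu*q)) := by
    rw [div_eq_div_iff (by positivity) hDu.ne']; ring
  have vx : ∀ a : ℤ, (1/δ)*((a:ℝ)/(lam*(p:ℝ))) = (a:ℝ)/(δ*(lam*p)) := by
    intro a; rw [one_div_mul_eq_div, div_div, mul_comm (lam*(p:ℝ)) δ]
  have vy : (1/δ)*(mu*(n:ℝ)) = ((p:ℝ)*(c*n))/(δ*(lam*p)) := by
    rw [one_div_mul_eq_div, div_eq_div_iff hδ.ne' hDv.ne', hc]; ring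
  have vw : 1/(δ*lam) = (p:ℝ)/(δ*(lam*p)) := by
    rw [div_eq_div_iff (by positivity) hDv.ne']; ring
  set A : ℝ := (q:ℝ)*(c*m) with hA
  set B : ℝ := (((q:ℤ)*j + e : ℤ):ℝ) with hB
  set C : ℝ := (p:ℝ)*(c*n) with hC
  set E : ℝ := (((p:ℤ)*j + d : ℤ):ℝ) with hE
  refine ⟨((min A B)/(δ*(mu*q)), (min C E)/(δ*(lam*p))), ?_⟩
  rintro w (⟨r, hr, rfl⟩ | ⟨r, hr, rfl⟩) <;> rw [Set.mem_Ico] at hr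
  · refine ⟨?_, ?_, ?_, ?_⟩
    · show (min A B)/(δ*(mu*q)) ≤ (1/δ)*(lam*(m:ℝ))
      rw [ux]
      gcongr
      exact min_le_left _ _
    · show (1/δ)*(lam*(m:ℝ)) < (min A B)/(δ*(mu*q)) + 1/(δ*mu)
      rw [ux, uw, ← add_div]
      gcongr
      rw [← min_add_add_right]
      refine lt_min (by linarith) KA
    · show (min C E)/(δ*(lam*p)) ≤ (1/δ)*(_/(lam*(p:ℝ)))
      rw [vx]
      gcongr
      refine le_trans (min_le_right _ _) ?_
      rw [hE]; push_cast
      have hr0 : (0:ℝ) ≤ (r:ℝ) := by exact_mod_cast hr.1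
      linarith
    · show (1/δ)*(_/(lam*(p:ℝ))) < (min C E)/(δ*(lam*p)) + 1/(δ*lam)
      rw [vx, vw, ← add_div]
      gcongr
      rw [← min_add_add_right]
      refine lt_min (KD r hr.1 hr.2) ?_
      rw [hE]; push_cast
      have hr2 : (r:ℝ) < (p:ℝ) := by exact_mod_cast hr.2
      linarith
  · refine ⟨?_, ?_, ?_, ?_⟩
    · show (min A B)/(δ*(mu*q)) ≤ (1/δ)*(_/(mu*(q:ℝ)))
      rw [uy]
      gcongr
      refine le_trans (min_le_right _ _) ?_
      rw [hB]; push_cast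
      have hr0 : (0:ℝ) ≤ (r:ℝ) := by exact_mod_cast hr.1
      linarith
    · show (1/δ)*(_/(mu*(q:ℝ))) < (min A B)/(δ*(mu*q)) + 1/(δ*mu)
      rw [uy, uw, ← add_div]
      gcongr
      rw [← min_add_add_right]
      refine lt_min (KB r hr.1 hr.2) ?_
      rw [hB]; push_cast
      have hr2 : (r:ℝ) < (q:ℝ) := by exact_mod_cast hr.2
      linarith
    · show (min C E)/(δ*(lam*p)) ≤ (1/δ)*(mu*(n:ℝ))
      rw [vy]
      gcongr
      exact min_le_left _ _
    · show (1/δ)*(mu*(n:ℝ)) < (min C E)/(δ*(lam*p)) + 1/(δ*lam)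
      rw [vy, vw, ← add_div]
      gcongr
      rw [← min_add_add_right]
      refine lt_min (by linarith) KC

end main

theorem stmt18 (δ lam mu : ℝ) (hδ : 0 < δ) (hlam : 0 < lam) (hmu : 0 < mu)
    (p q : ℕ) (hp : 1 ≤ p) (hq : 1 ≤ q) (hlm : lam * mu ≤ 1) :
    ∃ XP YP : ℕ → Set (ℝ × ℝ),
      (∀ k l : ℕ, k ≠ l → Disjoint (XP k) (XP l)) ∧
      (⋃ k, XP k) =
        {w : ℝ × ℝ | ∃ m n : ℤ,
          w = ((1 / δ) * (lam * (m : ℝ)), (1 / δ) * ((n : ℝ) / (lam * (p : ℝ))))} ∧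
      (∀ k l : ℕ, k ≠ l → Disjoint (YP k) (YP l)) ∧
      (⋃ k, YP k) =
        {w : ℝ × ℝ | ∃ m n : ℤ,
          w = ((1 / δ) * ((m : ℝ) / (mu * (q : ℝ))), (1 / δ) * (mu * (n : ℝ)))} ∧
      ∀ k : ℕ, (XP k).ncard = p ∧ (YP k).ncard = q ∧
        ∃ v : ℝ × ℝ, (XP k ∪ YP k) ⊆
          {w : ℝ × ℝ | v.1 ≤ w.1 ∧ w.1 < v.1 + 1 / (δ * mu) ∧
            v.2 ≤ w.2 ∧ w.2 < v.2 + 1 / (δ * lam)} := by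
  set c : ℝ := lam * mu with hc
  refine ⟨fun k => XBlk δ lam c p (zenc k), fun k => YBlk δ mu c q (zenc k),
    ?_, ?_, ?_, ?_, ?_⟩
  · intro k l hkl
    exact Xdisj hδ.ne' hlam.ne' hp (fun h => hkl (zenc.injective h))
  · exact Xunion hδ.ne' hlam.ne' hp
  · intro k l hkl
    exact Ydisj hδ.ne' hmu.ne' hq (fun h => hkl (zenc.injective h))
  · exact Yunion hδ.ne' hmu.ne' hq
  · intro k
    exact ⟨Xcard hδ.ne' hlam.ne' hp _, Ycard hδ.ne' hmu.ne' hq _,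
      boxlem hδ hlam hmu hc hlm hp hq (zenc k)⟩
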